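/- For every k ≥ 1, if ι_k denotes the increasing permutation 1 2 ⋯ k, then 𝒜 Av(ι_k) = Av(ι_k); that is, the set of permutations that a priority queue can transform into some ι_k-avoiding permutation is exactly the set of ι_k-avoiding permutations. -/

import Mathlib

/-- A permutation of length `n` (a bijection of `{0, …, n-1}`, identified with the
sequence of its values), packaged with its length. -/
abbrev PermSig : Type := Σ n : ℕ, Equiv.Perm (Fin n)

/-- Pattern containment: the permutation `α` of length `k` is contained in the
permutation `τ` of length `n` if there is an increasing choice of positions on which
`τ` is order-isomorphic to `α`. -/
def Contains {k n : ℕ} (α : Equiv.Perm (Fin k)) (τ : Equiv.Perm (Fin n)) : Prop :=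
  ∃ f : Fin k ↪o Fin n, ∀ i j : Fin k, α i < α j ↔ τ (f i) < τ (f j)

/-- The avoidance class `Av B`: all permutations containing no member of `B`. -/
def Av (B : Set PermSig) : Set PermSig :=
  {τ : PermSig | ∀ β ∈ B, ¬ Contains β.2 τ.2}

/-- A pattern class: a set of permutations downward closed under pattern containment. -/
def IsPatternClass (C : Set PermSig) : Prop :=
  ∀ (k n : ℕ) (α : Equiv.Perm (Fin k)) (τ : Equiv.Perm (Fin n)),
    Contains α τ → (⟨n, τ⟩ : PermSig) ∈ C → (⟨k, α⟩ : PermSig) ∈ C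

/-- The base relation of the poset `P(τ)` on values: `x ≺ y` whenever `x` appears
before `y` in `τ` and either `x > y`, or some value `z` appears between `x` and `y`
in `τ` with `x < y < z`. -/
def PQBase {n : ℕ} (τ : Equiv.Perm (Fin n)) (x y : Fin n) : Prop :=
  τ.symm x < τ.symm y ∧
    (y < x ∨ ∃ z : Fin n, τ.symm x < τ.symm z ∧ τ.symm z < τ.symm y ∧ x < y ∧ y < z)

/-- The poset `P(τ)`: the transitive closure of the base relation. -/
def PQ {n : ℕ} (τ : Equiv.Perm (Fin n)) : Fin n → Fin n → Prop :=
  Relation.TransGen (PQBase τ)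

/-- `σ` is a linear extension of `P(τ)`; equivalently, `(σ, τ)` is an allowable pair,
i.e. a priority queue can produce output `τ` from input `σ`. -/
def Allowable {n : ℕ} (σ τ : Equiv.Perm (Fin n)) : Prop :=
  ∀ x y : Fin n, PQ τ x y → σ.symm x < σ.symm y

/-- `C𝒜`: the set of permutations obtainable by a priority queue from an input in `C`. -/
def ImageA (C : Set PermSig) : Set PermSig :=
  {τ : PermSig | ∃ σ : Equiv.Perm (Fin τ.1), (⟨τ.1, σ⟩ : PermSig) ∈ C ∧ Allowable σ τ.2}

/-- `𝒜C`: the set of permutations that a priority queue can transform into some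
member of `C`. -/
def PreimageA (C : Set PermSig) : Set PermSig :=
  {σ : PermSig | ∃ τ : Equiv.Perm (Fin σ.1), (⟨σ.1, τ⟩ : PermSig) ∈ C ∧ Allowable σ.2 τ}

/-- For every `k ≥ 1`, if `ι_k` denotes the increasing (identity) permutation
`1 2 ⋯ k`, then `𝒜 Av(ι_k) = Av(ι_k)`. -/
theorem preimageA_av_increasing (k : ℕ) (hk : 1 ≤ k) :
    PreimageA (Av {⟨k, (1 : Equiv.Perm (Fin k))⟩}) =
      Av {⟨k, (1 : Equiv.Perm (Fin k))⟩} := by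
  ext ⟨n, σ⟩
  constructor
  · rintro ⟨τ, hτ, hall⟩ β hβ hcon
    simp only [Set.mem_singleton_iff] at hβ
    subst hβ
    refine hτ ⟨k, (1 : Equiv.Perm (Fin k))⟩ rfl ?_
    obtain ⟨f, hf⟩ := hcon
    simp only [Equiv.Perm.coe_one, id] at hf
    have key : ∀ i j : Fin k, i < j → τ.symm (σ (f i)) < τ.symm (σ (f j)) := by
      intro i j hij
      have hxy : σ (f i) < σ (f j) := (hf i j).1 hij
      rcases lt_trichotomy (τ.symm (σ (f i))) (τ.symm (σ (f j))) with h | h | h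
      · exact h
      · exact absurd (τ.symm.injective h) (ne_of_lt hxy)
      · have hpq : PQ τ (σ (f j)) (σ (f i)) :=
          Relation.TransGen.single ⟨h, Or.inl hxy⟩
        have := hall _ _ hpq
        simp only [Equiv.symm_apply_apply] at this
        exact absurd (f.lt_iff_lt.2 hij) (not_lt.2 this.le)
    refine ⟨OrderEmbedding.ofStrictMono (fun i => τ.symm (σ (f i))) key, ?_⟩
    intro i j
    simp only [Equiv.Perm.coe_one, id, OrderEmbedding.coe_ofStrictMono,
      Equiv.apply_symm_apply]
    convert hf i j using 2 <;> exact τ.apply_symm_apply _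
  · intro hσ
    refine ⟨σ, hσ, ?_⟩
    intro x y h
    induction h with
    | single h => exact h.1
    | tail _ h ih => exact ih.trans h.1
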